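/- Let S be a finite set of positive integers with |S| ≥ 2 and max(S) = j, and suppose gcd of all elements of S is 1 (i.e., S ⊄ mℤ for any m ≥ 2). Then F^{(S)}_n / φ_S^n converges to a positive real limit as n → ∞, where φ_S > 1 is the unique positive real number with ∑_{ℓ∈S} φ_S^{−ℓ} = 1. -/

import Mathlib

theorem rep_large' (S : Finset ℕ) (hgcd : S.gcd id = 1) :
    ∃ N0 : ℕ, ∀ d ≥ N0, ∃ L : List ℕ, (∀ x ∈ L, x ∈ S) ∧ L.sum = d := by
  set Rep : ℕ → Prop := fun d => ∃ L : List ℕ, (∀ x ∈ L, x ∈ S) ∧ L.sum = d with hRep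
  have rep0 : Rep 0 := ⟨[], by simp⟩
  have repAdd : ∀ a b, Rep a → Rep b → Rep (a + b) := by
    rintro a b ⟨La, hLa, hsa⟩ ⟨Lb, hLb, hsb⟩
    refine ⟨La ++ Lb, ?_, by simp [hsa, hsb]⟩
    intro x hx
    rcases List.mem_append.mp hx with h | h
    exacts [hLa x h, hLb x h]
  have repMul : ∀ k a, Rep a → Rep (k * a) := by
    intro k a ha
    induction k with
    | zero => simpa using rep0
    | succ n ih => have := repAdd _ _ ih ha; rw [Nat.succ_mul]; exact this
  have key : ∀ T : Finset ℕ, T ⊆ S → ∃ a b : ℕ, Rep a ∧ Rep b ∧ (a : ℤ) = b + T.gcd id := by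
    intro T
    induction T using Finset.induction with
    | empty => intro _; exact ⟨0, 0, rep0, rep0, by simp⟩
    | @insert x T hx ih =>
      intro hsub
      obtain ⟨a, b, hra, hrb, hab⟩ := ih (fun y hy => hsub (Finset.mem_insert_of_mem hy))
      have hxS : x ∈ S := hsub (Finset.mem_insert_self x T)
      set g : ℕ := T.gcd id with hg
      have hgin : (insert x T).gcd id = Nat.gcd x g := by
        rw [Finset.gcd_insert]; rfl
      set u : ℤ := Nat.gcdA x g with hu
      set v : ℤ := Nat.gcdB x g with hv
      have hbez : (Nat.gcd x g : ℤ) = x * u + g * v := Nat.gcd_eq_gcd_ab x g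
      refine ⟨x * u.toNat + a * v.toNat + b * (-v).toNat,
              x * (-u).toNat + a * (-v).toNat + b * v.toNat, ?_, ?_, ?_⟩
      · exact repAdd _ _ (repAdd _ _ (by rw [mul_comm]; exact repMul _ _ ⟨[x], by simp [hxS]⟩)
          (by rw [mul_comm]; exact repMul _ _ hra)) (by rw [mul_comm]; exact repMul _ _ hrb)
      · exact repAdd _ _ (repAdd _ _ (by rw [mul_comm]; exact repMul _ _ ⟨[x], by simp [hxS]⟩)
          (by rw [mul_comm]; exact repMul _ _ hra)) (by rw [mul_comm]; exact repMul _ _ hrb)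
      · rw [hgin]
        push_cast
        rw [hbez]
        have h1 : (u.toNat : ℤ) - (-u).toNat = u := Int.toNat_sub_toNat_neg u
        have h2 : (v.toNat : ℤ) - (-v).toNat = v := Int.toNat_sub_toNat_neg v
        have hg' : (g : ℤ) = a - b := by rw [hab]; ring
        rw [hg']
        nlinarith [h1, h2]
  obtain ⟨a, b, hra, hrb, hab⟩ := key S (le_refl _)
  rw [hgcd] at hab
  have hab' : a = b + 1 := by exact_mod_cast hab
  rcases Nat.eq_zero_or_pos b with hb0 | hb1
  · subst hb0
    refine ⟨0, fun d _ => ?_⟩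
    have : Rep (d * a) := repMul d a hra
    simpa [hab'] using this
  · refine ⟨b * b, fun d hd => ?_⟩
    set q := d / b with hq
    set r := d % b with hr
    have hrb' : r < b := Nat.mod_lt _ hb1
    have hqb : b ≤ q := (Nat.le_div_iff_mul_le hb1).mpr hd
    have hrq : r ≤ q := le_trans hrb'.le hqb
    obtain ⟨s, hs⟩ := Nat.exists_eq_add_of_le hrq
    have hdec : d = b * q + r := (Nat.div_add_mod d b).symm ▸ by omega
    have : Rep (b * s + r * a) := repAdd _ _ (by rw [mul_comm]; exact repMul _ _ hrb)
      (repMul r a hra)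
    have heq : b * s + r * a = d := by rw [hab', hdec, hs]; ring
    rwa [heq] at this

theorem stmt_19 (S : Finset ℕ) (hS : S.Nonempty) (hpos : ∀ ℓ ∈ S, 0 < ℓ)
    (hcard : 2 ≤ S.card) (hgcd : S.gcd id = 1)
    (F : ℕ → ℕ)
    (hF0 : ∀ n < S.max' hS - 1, F n = 0)
    (hF1 : F (S.max' hS - 1) = 1)
    (hFrec : ∀ n ≥ S.max' hS, F n = ∑ ℓ ∈ S, F (n - ℓ))
    (φ : ℝ) (hφgt : 1 < φ)
    (hφ : ∑ ℓ ∈ S, φ ^ (-(ℓ : ℤ)) = 1) :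
    ∃ c : ℝ, 0 < c ∧
      Filter.Tendsto (fun n => (F n : ℝ) / φ ^ n) Filter.atTop (nhds c) := by
  classical
  set j : ℕ := S.max' hS with hj
  have hjS : j ∈ S := S.max'_mem hS
  have hj1 : 1 ≤ j := hpos j hjS
  have hle : ∀ ℓ ∈ S, ℓ ≤ j := fun ℓ h => S.le_max' ℓ h
  have hφ0 : (0:ℝ) < φ := lt_trans one_pos hφgt
  have hφpow : ∀ n : ℕ, (0:ℝ) < φ ^ n := fun n => pow_pos hφ0 n
  -- weights
  set w : ℕ → ℝ := fun ℓ => (φ ^ ℓ)⁻¹ with hw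
  have hwpos : ∀ ℓ, 0 < w ℓ := fun ℓ => inv_pos.mpr (hφpow ℓ)
  have hwle1 : ∀ ℓ, w ℓ ≤ 1 := by
    intro ℓ
    rw [hw]
    exact inv_le_one_of_one_le₀ (one_le_pow₀ hφgt.le)
  have hw1 : ∑ ℓ ∈ S, w ℓ = 1 := by
    rw [← hφ]
    refine Finset.sum_congr rfl fun ℓ _ => ?_
    rw [hw, zpow_neg, zpow_natCast]
  -- normalized sequence
  set G : ℕ → ℝ := fun n => (F n : ℝ) / φ ^ n with hG
  have hG0 : ∀ n, 0 ≤ G n := fun n => div_nonneg (Nat.cast_nonneg _) (hφpow n).le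
  have Grec : ∀ m, j ≤ m → G m = ∑ ℓ ∈ S, w ℓ * G (m - ℓ) := by
    intro m hm
    rw [hG]
    simp only
    rw [hFrec m hm]
    push_cast
    rw [Finset.sum_div]
    refine Finset.sum_congr rfl fun ℓ hℓ => ?_
    have hφm : φ ^ m = φ ^ ℓ * φ ^ (m - ℓ) := by
      rw [← pow_add]; congr 1; have := hle ℓ hℓ; omega
    show (F (m - ℓ) : ℝ) / φ ^ m = (φ ^ ℓ)⁻¹ * ((F (m - ℓ) : ℝ) / φ ^ (m - ℓ))
    rw [hφm, inv_mul_eq_div, div_div, mul_comm (φ ^ (m - ℓ))]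
  -- window sup and inf
  have hrange : (Finset.range j).Nonempty := ⟨0, Finset.mem_range.mpr hj1⟩
  set Mx : ℕ → ℝ := fun n => (Finset.range j).sup' hrange (fun i => G (n + i)) with hMx
  set mn : ℕ → ℝ := fun n => (Finset.range j).inf' hrange (fun i => G (n + i)) with hmn
  have up : ∀ n m, n ≤ m → G m ≤ Mx n := by
    intro n m
    induction m using Nat.strong_induction_on with
    | _ m ih =>
      intro hnm
      by_cases h : m < n + j
      · have hmem : m - n ∈ Finset.range j := Finset.mem_range.mpr (by omega)
        have h2 := Finset.le_sup' (fun i => G (n + i)) hmem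
        have h3 : n + (m - n) = m := by omega
        exact h3 ▸ h2
      · push_neg at h
        have hmj : j ≤ m := by omega
        rw [Grec m hmj]
        calc ∑ ℓ ∈ S, w ℓ * G (m - ℓ) ≤ ∑ ℓ ∈ S, w ℓ * Mx n := by
              refine Finset.sum_le_sum fun ℓ hℓ => ?_
              refine mul_le_mul_of_nonneg_left ?_ (hwpos ℓ).le
              exact ih (m - ℓ) (by have := hpos ℓ hℓ; omega) (by have := hle ℓ hℓ; omega)
          _ = Mx n := by rw [← Finset.sum_mul, hw1, one_mul]
  have down : ∀ n m, n ≤ m → mn n ≤ G m := by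
    intro n m
    induction m using Nat.strong_induction_on with
    | _ m ih =>
      intro hnm
      by_cases h : m < n + j
      · have hmem : m - n ∈ Finset.range j := Finset.mem_range.mpr (by omega)
        have h2 := Finset.inf'_le (fun i => G (n + i)) hmem
        have h3 : n + (m - n) = m := by omega
        exact h3 ▸ h2
      · push_neg at h
        have hmj : j ≤ m := by omega
        rw [Grec m hmj]
        calc mn n = ∑ ℓ ∈ S, w ℓ * mn n := by rw [← Finset.sum_mul, hw1, one_mul]
          _ ≤ ∑ ℓ ∈ S, w ℓ * G (m - ℓ) := by
              refine Finset.sum_le_sum fun ℓ hℓ => ?_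
              refine mul_le_mul_of_nonneg_left ?_ (hwpos ℓ).le
              exact ih (m - ℓ) (by have := hpos ℓ hℓ; omega) (by have := hle ℓ hℓ; omega)
  have hmnMx : ∀ n, mn n ≤ Mx n := fun n => le_trans (down n n le_rfl) (up n n le_rfl)
  have hMxanti : Antitone Mx := by
    refine antitone_nat_of_succ_le fun n => ?_
    refine Finset.sup'_le _ _ fun i hi => ?_
    exact up n (n + 1 + i) (by omega)
  have hmnmono : Monotone mn := by
    refine monotone_nat_of_le_succ fun n => ?_
    refine Finset.le_inf' _ _ fun i hi => ?_
    exact down n (n + 1 + i) (by omega)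
  -- single step bound
  have step : ∀ m B X ℓs, j ≤ m → ℓs ∈ S → (∀ ℓ ∈ S, G (m - ℓ) ≤ B) →
      G (m - ℓs) ≤ X → X ≤ B → G m ≤ B - w ℓs * (B - X) := by
    intro m B X ℓs hm hℓs hB hX hXB
    rw [Grec m hm, ← Finset.add_sum_erase _ _ hℓs]
    have h2 : ∑ ℓ ∈ S.erase ℓs, w ℓ = 1 - w ℓs := by
      rw [Finset.sum_erase_eq_sub hℓs, hw1]
    have h1 : ∑ ℓ ∈ S.erase ℓs, w ℓ * G (m - ℓ) ≤ (1 - w ℓs) * B := by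
      rw [← h2, Finset.sum_mul]
      refine Finset.sum_le_sum fun ℓ hℓ => ?_
      exact mul_le_mul_of_nonneg_left (hB ℓ (Finset.mem_of_mem_erase hℓ)) (hwpos ℓ).le
    have h3 : w ℓs * G (m - ℓs) ≤ w ℓs * X := mul_le_mul_of_nonneg_left hX (hwpos ℓs).le
    nlinarith [hwpos ℓs]
  -- minimal weight
  set w0 : ℝ := S.inf' hS w with hw0
  have hw0pos : 0 < w0 := by
    rw [hw0]
    exact (Finset.lt_inf'_iff hS).mpr fun ℓ _ => hwpos ℓ
  have hw0le : ∀ ℓ ∈ S, w0 ≤ w ℓ := fun ℓ h => Finset.inf'_le w h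
  have hw01 : w0 ≤ 1 := le_trans (hw0le j hjS) (hwle1 j)
  -- chain lemma
  have chain : ∀ (L : List ℕ), (∀ x ∈ L, x ∈ S) → ∀ n k0, n ≤ k0 →
      G (k0 + L.sum + j) ≤ Mx n - w0 ^ (L.length + 1) * (Mx n - G k0) := by
    intro L
    induction L with
    | nil =>
      intro _ n k0 hk0
      simp only [List.sum_nil, List.length_nil, add_zero, zero_add, pow_one]
      have hstep := step (k0 + j) (Mx n) (G k0) j (by omega) hjS
        (fun ℓ hℓ => up n (k0 + j - ℓ) (by have := hle ℓ hℓ; omega))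
        (le_of_eq (by rw [Nat.add_sub_cancel])) (up n k0 hk0)
      have hGk0 : G k0 ≤ Mx n := up n k0 hk0
      nlinarith [hw0le j hjS, hwpos j]
    | cons ℓ L ih =>
      intro hmem n k0 hk0
      have hℓS : ℓ ∈ S := hmem ℓ (List.mem_cons_self)
      have hIH := ih (fun x hx => hmem x (List.mem_cons_of_mem ℓ hx)) n k0 hk0
      have hGk0 : G k0 ≤ Mx n := up n k0 hk0
      have hXB : Mx n - w0 ^ (L.length + 1) * (Mx n - G k0) ≤ Mx n := by
        nlinarith [pow_pos hw0pos (L.length + 1)]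
      have hsum : k0 + (ℓ :: L).sum + j = (k0 + L.sum + j) + ℓ := by
        simp [List.sum_cons]; omega
      have hstep := step (k0 + (ℓ :: L).sum + j)
        (Mx n) (Mx n - w0 ^ (L.length + 1) * (Mx n - G k0)) ℓ (by omega) hℓS
        (fun ℓ' hℓ' => up n (k0 + (ℓ :: L).sum + j - ℓ') (by have := hle ℓ' hℓ'; omega))
        (by rw [hsum, Nat.add_sub_cancel]; exact hIH) hXB
      have hwℓ : w0 ≤ w ℓ := hw0le ℓ hℓS
      have h1 : w0 ^ (L.length + 1) ≥ 0 := (pow_pos hw0pos _).le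
      have hlen : ((ℓ :: L).length : ℕ) = L.length + 1 := rfl
      rw [hlen]
      have : w0 ^ (L.length + 1 + 1) = w0 * w0 ^ (L.length + 1) := by ring
      rw [this]
      nlinarith [hwpos ℓ]
  -- representability threshold
  obtain ⟨N0, hN0⟩ := rep_large' S hgcd
  have hlenle : ∀ L : List ℕ, (∀ x ∈ L, x ∈ S) → L.length ≤ L.sum := by
    intro L
    induction L with
    | nil => intro _; simp
    | cons x L ih =>
      intro hmem
      have hx : 1 ≤ x := hpos x (hmem x (List.mem_cons_self))
      have := ih (fun y hy => hmem y (List.mem_cons_of_mem x hy))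
      simp only [List.length_cons, List.sum_cons]
      omega
  set T : ℕ := N0 + 2 * j with hT
  set δ : ℝ := w0 ^ T with hδ
  have hδpos : 0 < δ := pow_pos hw0pos T
  have hδ1 : δ ≤ 1 := pow_le_one₀ hw0pos.le hw01
  have hcontr : ∀ n, Mx (n + T) ≤ Mx n - δ * (Mx n - mn n) := by
    intro n
    obtain ⟨i0, hi0mem, hi0⟩ := Finset.exists_mem_eq_inf' hrange (fun i => G (n + i))
    have hi0j : i0 < j := Finset.mem_range.mp hi0mem
    refine Finset.sup'_le _ _ fun r hr => ?_
    have hrj : r < j := Finset.mem_range.mp hr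
    obtain ⟨L, hLmem, hLsum⟩ := hN0 (N0 + j + r - i0) (by omega)
    have hidx : n + T + r = (n + i0) + L.sum + j := by omega
    have hch := chain L hLmem n (n + i0) (by omega)
    have hlen : L.length + 1 ≤ T := by have := hlenle L hLmem; omega
    have hδle : δ ≤ w0 ^ (L.length + 1) := pow_le_pow_of_le_one hw0pos.le hw01 hlen
    have hE : 0 ≤ Mx n - mn n := by linarith [hmnMx n]
    have hmni0 : mn n = G (n + i0) := hi0
    show G (n + T + r) ≤ Mx n - δ * (Mx n - mn n)
    rw [hidx]
    calc G ((n + i0) + L.sum + j) ≤ Mx n - w0 ^ (L.length + 1) * (Mx n - G (n + i0)) := hch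
      _ ≤ Mx n - δ * (Mx n - mn n) := by
          rw [← hmni0]
          nlinarith
  -- difference sequence
  set D : ℕ → ℝ := fun n => Mx n - mn n with hD
  have hT1 : 1 ≤ T := by omega
  have hD0 : ∀ n, 0 ≤ D n := fun n => by simp only [hD]; linarith [hmnMx n]
  have hDanti : Antitone D := fun a b hab => sub_le_sub (hMxanti hab) (hmnmono hab)
  have hDT : ∀ n, D (n + T) ≤ (1 - δ) * D n := by
    intro n
    have h1 := hcontr n
    have h2 : mn n ≤ mn (n + T) := hmnmono (by omega)
    have h3 : (1 - δ) * (Mx n - mn n) = Mx n - mn n - δ * (Mx n - mn n) := by ring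
    show Mx (n + T) - mn (n + T) ≤ (1 - δ) * (Mx n - mn n)
    linarith
  have hDk : ∀ k, D (k * T) ≤ (1 - δ) ^ k * D 0 := by
    intro k
    induction k with
    | zero => simp
    | succ k ih =>
      have h1 := hDT (k * T)
      have h2 : (k + 1) * T = k * T + T := by ring
      rw [h2]
      have h3 : (0:ℝ) ≤ 1 - δ := by linarith
      calc D (k * T + T) ≤ (1 - δ) * D (k * T) := h1
        _ ≤ (1 - δ) * ((1 - δ) ^ k * D 0) := mul_le_mul_of_nonneg_left ih h3
        _ = (1 - δ) ^ (k + 1) * D 0 := by ring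
  have hdiv : Filter.Tendsto (fun n : ℕ => n / T) Filter.atTop Filter.atTop := by
    refine Filter.tendsto_atTop_atTop.mpr fun b => ⟨b * T, fun n hn => ?_⟩
    exact (Nat.le_div_iff_mul_le (by omega)).mpr hn
  have hpowlim : Filter.Tendsto (fun k : ℕ => (1 - δ) ^ k * D 0) Filter.atTop (nhds 0) := by
    have h := tendsto_pow_atTop_nhds_zero_of_lt_one (by linarith : (0:ℝ) ≤ 1 - δ)
      (by linarith : 1 - δ < 1)
    simpa using h.mul_const (D 0)
  have hDlim : Filter.Tendsto D Filter.atTop (nhds 0) := by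
    refine squeeze_zero hD0 (g := fun n => (1 - δ) ^ (n / T) * D 0) (fun n => ?_)
      (hpowlim.comp hdiv)
    calc D n ≤ D (n / T * T) := hDanti (Nat.div_mul_le_self n T)
      _ ≤ (1 - δ) ^ (n / T) * D 0 := hDk (n / T)
  have hBdd : BddBelow (Set.range Mx) := by
    refine ⟨0, ?_⟩
    rintro x ⟨n, rfl⟩
    exact le_trans (hG0 n) (up n n le_rfl)
  set c : ℝ := ⨅ n, Mx n with hc
  have hMlim : Filter.Tendsto Mx Filter.atTop (nhds c) := tendsto_atTop_ciInf hMxanti hBdd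
  have hmnlim : Filter.Tendsto mn Filter.atTop (nhds c) := by
    have h := hMlim.sub hDlim
    rw [sub_zero] at h
    have heq : (fun n => Mx n - D n) = mn := by
      funext n; simp only [hD]; ring
    rwa [heq] at h
  have hGlim : Filter.Tendsto G Filter.atTop (nhds c) :=
    tendsto_of_tendsto_of_tendsto_of_le_of_le hmnlim hMlim
      (fun n => down n n le_rfl) (fun n => up n n le_rfl)
  -- positivity
  have Fpos : ∀ L : List ℕ, (∀ x ∈ L, x ∈ S) → 1 ≤ F (j - 1 + L.sum) := by
    intro L
    induction L with
    | nil => simp [hF1]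
    | cons x L ih =>
      intro hmem
      have hx1 : 1 ≤ x := hpos x (hmem x (List.mem_cons_self))
      have hm : j ≤ j - 1 + (x :: L).sum := by simp only [List.sum_cons]; omega
      rw [hFrec _ hm]
      have hterm : j - 1 + (x :: L).sum - x = j - 1 + L.sum := by
        simp only [List.sum_cons]; omega
      calc 1 ≤ F (j - 1 + (x :: L).sum - x) := by
            rw [hterm]; exact ih (fun y hy => hmem y (List.mem_cons_of_mem x hy))
        _ ≤ ∑ ℓ ∈ S, F (j - 1 + (x :: L).sum - ℓ) :=
            Finset.single_le_sum (f := fun ℓ => F (j - 1 + (x :: L).sum - ℓ))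
              (fun i _ => Nat.zero_le _) (hmem x (List.mem_cons_self))
  have hmn1 : 0 < mn (j - 1 + N0) := by
    rw [hmn]
    refine (Finset.lt_inf'_iff hrange).mpr fun i hi => ?_
    obtain ⟨L, hLm, hLs⟩ := hN0 (N0 + i) (by omega)
    have hF := Fpos L hLm
    rw [hLs] at hF
    have hidx : j - 1 + N0 + i = j - 1 + (N0 + i) := by omega
    show (0:ℝ) < G (j - 1 + N0 + i)
    rw [hidx]
    exact div_pos (by exact_mod_cast hF) (hφpow _)
  have hclb : mn (j - 1 + N0) ≤ c :=
    ge_of_tendsto hmnlim (Filter.eventually_atTop.mpr ⟨j - 1 + N0, fun m hm => hmnmono hm⟩)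
  exact ⟨c, lt_of_lt_of_le hmn1 hclb, hGlim⟩
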